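/- Let r > 1 be a real number, suppose at least one prime is r-mighty, and suppose the set of r-mighty primes is finite; let L be the positive integer such that p_L is the largest r-mighty prime. Then the number of connected components of the topological closure of σ_{−r}(ℕ⁺) in ℝ is at most ∏_{i=1}^{L} ⌈ log p_{L+1} / log p_i ⌉. -/

import Mathlib

open scoped BigOperators

/-- The divisor function `σ_{-r}(n) = ∑_{d ∣ n} d^{-r}`. -/
noncomputable def sigmaNeg (r : ℝ) (n : ℕ) : ℝ := ∑ d ∈ n.divisors, (d : ℝ) ^ (-r)

/-- The range `σ_{-r}(ℕ⁺) = {σ_{-r}(n) : n ∈ ℕ⁺}`. -/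
def sigmaSet (r : ℝ) : Set ℝ := {x | ∃ n : ℕ, 0 < n ∧ x = sigmaNeg r n}

/-- The product `∏_{q prime, q > p} 1/(1 - q^{-r})` over all primes greater than `p`. -/
noncomputable def mightyProd (r : ℝ) (p : ℕ) : ℝ :=
  ∏' q : {q : ℕ // q.Prime ∧ p < q}, (1 - ((q : ℕ) : ℝ) ^ (-r))⁻¹

/-- A prime `p` is `r`-mighty if `1 + p^{-r} > ∏_{q prime, q > p} 1/(1 - q^{-r})`. -/
def IsMighty (r : ℝ) (p : ℕ) : Prop := 1 + (p : ℝ) ^ (-r) > mightyProd r p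

namespace Stmt12
noncomputable section
open Real Filter Topology Finset

/-- the i-th prime, 0-indexed -/
def q (i : ℕ) : ℕ := Nat.nth Nat.Prime i

lemma q_prime (i : ℕ) : (q i).Prime := Nat.prime_nth_prime i

lemma q_strictMono : StrictMono q := Nat.nth_strictMono Nat.infinite_setOf_prime

lemma two_le_q (i : ℕ) : 2 ≤ q i := (q_prime i).two_le

lemma q_ge (i : ℕ) : i + 2 ≤ q i := Nat.add_two_le_nth_prime i

lemma q_count {p : ℕ} (hp : p.Prime) : q (Nat.count Nat.Prime p) = p :=
  Nat.nth_count hp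

/-- x r i = (q i)^(-r) -/
def x (r : ℝ) (i : ℕ) : ℝ := (q i : ℝ) ^ (-r)

variable {r : ℝ}

lemma x_pos (i : ℕ) : 0 < x r i :=
  Real.rpow_pos_of_pos (by exact_mod_cast (q_prime i).pos) _

lemma x_le (hr : 1 < r) (i : ℕ) : x r i ≤ ((i : ℝ) + 2) ^ (-r) := by
  apply Real.rpow_le_rpow_of_nonpos (by positivity) ?_ (by linarith)
  exact_mod_cast q_ge i

lemma x_lt_half (hr : 1 < r) (i : ℕ) : x r i < 1 / 2 := by
  have h2 : (2:ℝ) ≤ (q i : ℝ) := by exact_mod_cast two_le_q i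
  have : x r i ≤ (2:ℝ) ^ (-r) :=
    Real.rpow_le_rpow_of_nonpos (by norm_num) h2 (by linarith)
  have h3 : (2:ℝ) ^ (-r) < 2 ^ (-1 : ℝ) :=
    Real.rpow_lt_rpow_of_exponent_lt (by norm_num) (by linarith)
  have h4 : (2:ℝ) ^ (-1 : ℝ) = 1/2 := by
    rw [Real.rpow_neg_one]; norm_num
  exact lt_of_le_of_lt this (h3.trans_eq h4)

lemma x_lt_one (hr : 1 < r) (i : ℕ) : x r i < 1 := by
  have := x_lt_half hr i; linarith

lemma summable_x (hr : 1 < r) : Summable (x r) := by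
  have h0 : Summable (fun n : ℕ => (n : ℝ) ^ (-r)) :=
    (Real.summable_nat_rpow (p := -r)).2 (by linarith)
  have h : Summable (fun i : ℕ => ((i : ℝ) + 2) ^ (-r)) := by
    have h1 := (summable_nat_add_iff (f := fun n : ℕ => (n : ℝ) ^ (-r)) 2).2 h0
    refine h1.congr fun i => ?_
    push_cast
    ring_nf
  exact h.of_nonneg_of_le (fun i => (x_pos i).le) (x_le hr)

/-- fp r i = (1 - x r i)⁻¹ -/
def fp (r : ℝ) (i : ℕ) : ℝ := (1 - x r i)⁻¹

lemma one_sub_x_pos (hr : 1 < r) (i : ℕ) : 0 < 1 - x r i := by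
  have := x_lt_one hr i; linarith

lemma fp_pos (hr : 1 < r) (i : ℕ) : 0 < fp r i := inv_pos.2 (one_sub_x_pos hr i)

lemma one_add_x_le_fp (hr : 1 < r) (i : ℕ) : 1 + x r i ≤ fp r i := by
  have h0 := x_pos (r := r) i
  have h1 := one_sub_x_pos hr i
  rw [fp, inv_eq_one_div, le_div_iff₀ h1]
  nlinarith

lemma one_le_fp (hr : 1 < r) (i : ℕ) : 1 ≤ fp r i := by
  have := one_add_x_le_fp hr i
  have := x_pos (r := r) i
  linarith

/-- lg = log ∘ fp -/
def lg (r : ℝ) (i : ℕ) : ℝ := Real.log (fp r i)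

lemma lg_nonneg (hr : 1 < r) (i : ℕ) : 0 ≤ lg r i :=
  Real.log_nonneg (one_le_fp hr i)

lemma exp_lg (hr : 1 < r) (i : ℕ) : Real.exp (lg r i) = fp r i :=
  Real.exp_log (fp_pos hr i)

lemma summable_lg (hr : 1 < r) : Summable (lg r) := by
  apply Summable.of_nonneg_of_le (lg_nonneg hr) (fun i => ?_)
    ((summable_x hr).mul_left 2)
  have hx := x_pos (r := r) i
  have hx2 := x_lt_half hr i
  have h01 := one_sub_x_pos hr i
  have h1 : Real.log (fp r i) ≤ fp r i - 1 :=
    Real.log_le_sub_one_of_pos (fp_pos hr i)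
  have h2 : fp r i - 1 = x r i / (1 - x r i) := by
    rw [fp]
    field_simp
    ring
  have h3 : x r i / (1 - x r i) ≤ 2 * x r i := by
    rw [div_le_iff₀ h01]
    nlinarith
  rw [lg]
  linarith

lemma summable_lg_add (hr : 1 < r) (t : ℕ) : Summable (fun k => lg r (k + t)) :=
  (summable_nat_add_iff t).2 (summable_lg hr)

lemma hasProd_fp_add (hr : 1 < r) (t : ℕ) :
    HasProd (fun k => fp r (k + t)) (Real.exp (∑' k, lg r (k + t))) := by
  have h := (summable_lg_add hr t).hasSum.rexp
  have he : (Real.exp ∘ fun k => lg r (k + t)) = fun k => fp r (k + t) :=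
    funext fun k => exp_lg hr _
  rwa [he] at h

lemma multipliable_fp_add (hr : 1 < r) (t : ℕ) :
    Multipliable (fun k => fp r (k + t)) := ⟨_, hasProd_fp_add hr t⟩

/-- tail product from index t -/
def M (r : ℝ) (t : ℕ) : ℝ := ∏' k : ℕ, fp r (k + t)

lemma M_eq_exp (hr : 1 < r) (t : ℕ) : M r t = Real.exp (∑' k, lg r (k + t)) :=
  (hasProd_fp_add hr t).tprod_eq

lemma one_le_M (hr : 1 < r) (t : ℕ) : 1 ≤ M r t := by
  rw [M_eq_exp hr, ← Real.exp_zero]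
  exact Real.exp_le_exp.2 (tsum_nonneg fun k => lg_nonneg hr _)

lemma M_pos (hr : 1 < r) (t : ℕ) : 0 < M r t := lt_of_lt_of_le one_pos (one_le_M hr t)

lemma fp_le_M (hr : 1 < r) (t : ℕ) : fp r t ≤ M r t := by
  rw [M_eq_exp hr, ← exp_lg hr t]
  apply Real.exp_le_exp.2
  have := Summable.le_tsum (summable_lg_add hr t) 0 (fun j _ => lg_nonneg hr _)
  simpa using this

lemma M_succ (hr : 1 < r) (t : ℕ) : M r t = fp r t * M r (t + 1) := by
  rw [M, tprod_eq_zero_mul' ?h]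
  case h =>
    exact (multipliable_fp_add hr (t + 1)).congr fun k => by ring_nf
  congr 1
  · simp
  · rw [M]
    apply tprod_congr
    intro k
    congr 1
    omega

lemma prod_fp_le_M (hr : 1 < r) (t : ℕ) (s : Finset ℕ) (hs : ∀ i ∈ s, t ≤ i) :
    ∏ i ∈ s, fp r i ≤ M r t := by
  classical
  have hinj : Set.InjOn (fun i => i - t) ↑s := by
    intro a ha b hb hab
    have := hs a ha; have := hs b hb
    simp only at hab
    omega
  have hprod : ∏ i ∈ s, fp r i = ∏ k ∈ s.image (fun i => i - t), fp r (k + t) := by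
    rw [Finset.prod_image (fun a ha b hb hab => hinj ha hb hab)]
    apply Finset.prod_congr rfl
    intro i hi
    congr 1
    have := hs i hi
    omega
  rw [hprod, M_eq_exp hr]
  have h1 : ∏ k ∈ s.image (fun i => i - t), fp r (k + t)
      = Real.exp (∑ k ∈ s.image (fun i => i - t), lg r (k + t)) := by
    rw [Real.exp_sum]
    exact Finset.prod_congr rfl fun k _ => (exp_lg hr _).symm
  rw [h1]
  apply Real.exp_le_exp.2
  exact Summable.sum_le_tsum _ (fun k _ => lg_nonneg hr _) (summable_lg_add hr t)

lemma M_tendsto_one (hr : 1 < r) : Tendsto (M r) atTop (𝓝 1) := by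
  have h0 : Tendsto (fun t => ∑' k, lg r (k + t)) atTop (𝓝 0) :=
    tendsto_sum_nat_add (lg r)
  have := (Real.continuous_exp.tendsto 0).comp h0
  rw [Real.exp_zero] at this
  exact this.congr fun t => (M_eq_exp hr t).symm

/-- the equivalence between ℕ and primes greater than q t -/
def primeShiftEquiv (t : ℕ) : ℕ ≃ {p : ℕ // p.Prime ∧ q t < p} where
  toFun k := ⟨q (k + (t + 1)), q_prime _, q_strictMono (by omega)⟩
  invFun p := Nat.count Nat.Prime p.1 - (t + 1)
  left_inv k := by
    simp only [q, Nat.count_nth_of_infinite Nat.infinite_setOf_prime]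
    omega
  right_inv p := by
    obtain ⟨p, hp, hlt⟩ := p
    have hq : q (Nat.count Nat.Prime p) = p := q_count hp
    have hgt : t < Nat.count Nat.Prime p := by
      by_contra h
      push_neg at h
      have := q_strictMono.monotone h
      rw [hq] at this
      omega
    apply Subtype.ext
    simp only
    rw [show Nat.count Nat.Prime p - (t + 1) + (t + 1) = Nat.count Nat.Prime p by omega, hq]

lemma mightyProd_eq (hr : 1 < r) (t : ℕ) : mightyProd r (q t) = M r (t + 1) := by
  rw [mightyProd, M, ← (primeShiftEquiv t).tprod_eq]
  apply tprod_congr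
  intro k
  rfl

/-! ### sigmaNeg basics -/

lemma sigmaNeg_zero : sigmaNeg r 0 = 0 := by simp [sigmaNeg]

lemma sigmaNeg_one : sigmaNeg r 1 = 1 := by simp [sigmaNeg]

/-- the arithmetic function n ↦ n^(-r) -/
def rpowAF (r : ℝ) : ArithmeticFunction ℝ :=
  ⟨fun n => if n = 0 then 0 else (n : ℝ) ^ (-r), by simp⟩

lemma isMultiplicative_rpowAF : (rpowAF r).IsMultiplicative := by
  constructor
  · simp [rpowAF]
  · intro m n h
    rcases eq_or_ne m 0 with rfl | hm
    · simp [rpowAF]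
    rcases eq_or_ne n 0 with rfl | hn
    · simp [rpowAF]
    have hmn : m * n ≠ 0 := mul_ne_zero hm hn
    simp only [rpowAF, ArithmeticFunction.coe_mk, if_neg hm, if_neg hn, if_neg hmn]
    push_cast
    exact Real.mul_rpow (by positivity) (by positivity)

lemma sigmaNeg_eq_zeta_mul (n : ℕ) :
    sigmaNeg r n = ((ArithmeticFunction.zeta : ArithmeticFunction ℕ) * rpowAF r) n := by
  rw [ArithmeticFunction.coe_zeta_mul_apply]
  unfold sigmaNeg
  apply Finset.sum_congr rfl
  intro d hd
  have hd0 : d ≠ 0 := Nat.pos_of_mem_divisors hd |>.ne'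
  simp [rpowAF, hd0]

lemma isMultiplicative_sigmaNeg :
    (((ArithmeticFunction.zeta : ArithmeticFunction ℕ) : ArithmeticFunction ℝ)
      * rpowAF r).IsMultiplicative :=
  (ArithmeticFunction.isMultiplicative_zeta.natCast).mul isMultiplicative_rpowAF

lemma sigmaNeg_mul {m n : ℕ} (h : m.Coprime n) :
    sigmaNeg r (m * n) = sigmaNeg r m * sigmaNeg r n := by
  rw [sigmaNeg_eq_zeta_mul, sigmaNeg_eq_zeta_mul, sigmaNeg_eq_zeta_mul]
  exact isMultiplicative_sigmaNeg.map_mul_of_coprime h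

lemma sigmaNeg_mul' (m n : ℕ) (h : m.Coprime n) :
    sigmaNeg r (m * n) = sigmaNeg r m * sigmaNeg r n := sigmaNeg_mul h

lemma sigmaNeg_factorization {n : ℕ} (hn : n ≠ 0) :
    sigmaNeg r n = n.factorization.prod fun p k => sigmaNeg r (p ^ k) :=
  Nat.multiplicative_factorization (sigmaNeg r) sigmaNeg_mul' sigmaNeg_one hn

/-! ### sigmaNeg at prime powers -/

/-- sigmaNeg of the a-th power of the i-th prime -/
def g (r : ℝ) (a i : ℕ) : ℝ := sigmaNeg r (q i ^ a)

lemma sigmaNeg_prime_pow {p : ℕ} (hp : p.Prime) (a : ℕ) :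
    sigmaNeg r (p ^ a) = ∑ j ∈ Finset.range (a + 1), ((p : ℝ) ^ (-r)) ^ j := by
  rw [sigmaNeg, Nat.sum_divisors_prime_pow hp]
  apply Finset.sum_congr rfl
  intro j _
  rw [Nat.cast_pow, ← Real.rpow_natCast (p : ℝ) j, ← Real.rpow_mul (by positivity),
    mul_comm, Real.rpow_mul (by positivity), Real.rpow_natCast]

lemma g_eq (a i : ℕ) : g r a i = ∑ j ∈ Finset.range (a + 1), (x r i) ^ j :=
  sigmaNeg_prime_pow (q_prime i) a

lemma g_zero (i : ℕ) : g r 0 i = 1 := by simp [g_eq]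

lemma g_succ (a i : ℕ) : g r (a + 1) i = g r a i + (x r i) ^ (a + 1) := by
  rw [g_eq, g_eq, Finset.sum_range_succ]

lemma one_le_g (hr : 1 < r) (a i : ℕ) : 1 ≤ g r a i := by
  rw [g_eq]
  have h0 : ((1:ℝ)) = ∑ j ∈ Finset.range 1, (x r i) ^ j := by simp
  rw [h0]
  apply Finset.sum_le_sum_of_subset_of_nonneg
  · exact Finset.range_subset_range.2 (by omega)
  · intro j _ _
    exact pow_nonneg (x_pos (r := r) i).le j

lemma g_pos (hr : 1 < r) (a i : ℕ) : 0 < g r a i := lt_of_lt_of_le one_pos (one_le_g hr a i)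

lemma g_mono (hr : 1 < r) {a b : ℕ} (h : a ≤ b) (i : ℕ) : g r a i ≤ g r b i := by
  rw [g_eq, g_eq]
  apply Finset.sum_le_sum_of_subset_of_nonneg
  · exact Finset.range_subset_range.2 (by omega)
  · intro j _ _
    exact pow_nonneg (x_pos (r := r) i).le j

lemma g_lt_fp (hr : 1 < r) (a i : ℕ) : g r a i < fp r i := by
  have hx0 := x_pos (r := r) i
  have hx1 := x_lt_one hr i
  have h1x : (0:ℝ) < 1 - x r i := one_sub_x_pos hr i
  have hxn : (0:ℝ) < (x r i) ^ (a + 1) := pow_pos hx0 _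
  rw [g_eq, fp, geom_sum_eq (ne_of_lt hx1)]
  have he : ((x r i) ^ (a+1) - 1) / (x r i - 1) = (1 - (x r i) ^ (a+1)) / (1 - x r i) := by
    rw [← neg_sub (1:ℝ) ((x r i) ^ (a+1)), ← neg_sub (1:ℝ) (x r i), neg_div_neg_eq]
  rw [he, inv_eq_one_div]
  rw [div_lt_div_iff_of_pos_right h1x]
  linarith

lemma g_tendsto_fp (hr : 1 < r) (i : ℕ) :
    Tendsto (fun a => g r a i) atTop (𝓝 (fp r i)) := by
  have h : HasSum (fun j => (x r i) ^ j) (1 - x r i)⁻¹ :=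
    hasSum_geometric_of_lt_one (x_pos (r := r) i).le (x_lt_one hr i)
  have h2 := h.tendsto_sum_nat
  rw [fp]
  have : (fun a => g r a i) = (fun a => ∑ j ∈ Finset.range (a + 1), (x r i) ^ j) :=
    funext fun a => g_eq a i
  rw [this]
  exact h2.comp (tendsto_add_atTop_nat 1)

lemma g_ratio (hr : 1 < r) (a i : ℕ) :
    g r (a + 1) i ≤ g r a i * (1 + (x r i) ^ (a + 1)) := by
  have h1 := one_le_g hr a i
  have h2 : (0:ℝ) < (x r i) ^ (a+1) := pow_pos (x_pos (r := r) i) _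
  rw [g_succ]
  nlinarith

/-! ### sigma bounds for rough numbers -/

lemma one_le_sigmaNeg {m : ℕ} (hm : 0 < m) : 1 ≤ sigmaNeg r m := by
  rw [sigmaNeg]
  have h1 : (1:ℕ) ∈ m.divisors := Nat.one_mem_divisors.2 hm.ne'
  have := Finset.single_le_sum (f := fun d : ℕ => (d : ℝ) ^ (-r))
    (fun d _ => Real.rpow_nonneg (Nat.cast_nonneg d) _) h1
  simpa using this

lemma sigmaNeg_pos {m : ℕ} (hm : 0 < m) : 0 < sigmaNeg r m :=
  lt_of_lt_of_le one_pos (one_le_sigmaNeg hm)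

/-- index of a prime -/
def idx (p : ℕ) : ℕ := Nat.count Nat.Prime p

lemma q_idx {p : ℕ} (hp : p.Prime) : q (idx p) = p := q_count hp

lemma idx_ge {p t : ℕ} (hp : p.Prime) (h : q t ≤ p) : t ≤ idx p := by
  by_contra hc
  push_neg at hc
  have := q_strictMono hc
  rw [q_idx hp] at this
  omega

lemma sigmaNeg_rough_le (hr : 1 < r) {t m : ℕ} (hm : 0 < m)
    (hq : ∀ p, p.Prime → p ∣ m → q t ≤ p) : sigmaNeg r m ≤ M r t := by
  classical
  rw [sigmaNeg_factorization hm.ne']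
  rw [Finsupp.prod]
  have hsup : m.factorization.support = m.primeFactors := Nat.support_factorization m
  have hle : ∀ p ∈ m.factorization.support,
      sigmaNeg r (p ^ m.factorization p) ≤ fp r (idx p) := by
    intro p hp
    rw [hsup] at hp
    have hpp : p.Prime := Nat.prime_of_mem_primeFactors hp
    have : sigmaNeg r (p ^ m.factorization p) = g r (m.factorization p) (idx p) := by
      rw [g, q_idx hpp]
    rw [this]
    exact (g_lt_fp hr _ _).le
  calc ∏ p ∈ m.factorization.support, sigmaNeg r (p ^ m.factorization p)
      ≤ ∏ p ∈ m.factorization.support, fp r (idx p) := by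
        apply Finset.prod_le_prod
        · intro p hp
          rw [hsup] at hp
          have hpp : p.Prime := Nat.prime_of_mem_primeFactors hp
          have : sigmaNeg r (p ^ m.factorization p) = g r (m.factorization p) (idx p) := by
            rw [g, q_idx hpp]
          rw [this]
          exact (g_pos hr _ _).le
        · exact hle
    _ = ∏ i ∈ m.factorization.support.image idx, fp r i := by
        rw [Finset.prod_image]
        intro a ha b hb hab
        rw [hsup] at ha hb
        have ha' := Nat.prime_of_mem_primeFactors ha
        have hb' := Nat.prime_of_mem_primeFactors hb
        rw [← q_idx ha', ← q_idx hb', hab]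
    _ ≤ M r t := by
        apply prod_fp_le_M hr
        intro i hi
        obtain ⟨p, hp, rfl⟩ := Finset.mem_image.1 hi
        rw [hsup] at hp
        have hpp := Nat.prime_of_mem_primeFactors hp
        exact idx_ge hpp (hq p hpp (Nat.dvd_of_mem_primeFactors hp))

/-- the set of sigmaNeg values of t-rough numbers -/
def V (r : ℝ) (t : ℕ) : Set ℝ :=
  {y | ∃ m : ℕ, 0 < m ∧ (∀ p, p.Prime → p ∣ m → q t ≤ p) ∧ y = sigmaNeg r m}

/-! ### the greedy approximation -/

lemma greedy (hr : 1 < r) {L : ℕ}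
    (hnm : ∀ t, L ≤ t → 1 + x r t ≤ M r (t + 1)) {t : ℕ} (ht : L ≤ t)
    {z : ℝ} (hz1 : 1 ≤ z) (hzM : z < M r t) (k : ℕ) :
    ∃ m : ℕ, 0 < m ∧ (∀ p, p.Prime → p ∣ m → ∃ i, t ≤ i ∧ i < t + k ∧ p = q i) ∧
      sigmaNeg r m ≤ z ∧ z < sigmaNeg r m * M r (t + k) := by
  classical
  induction k with
  | zero =>
    refine ⟨1, one_pos, ?_, ?_, ?_⟩
    · intro p hp hdvd
      exact absurd (Nat.eq_one_of_dvd_one hdvd) hp.ne_one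
    · rw [sigmaNeg_one]; exact hz1
    · rw [sigmaNeg_one, one_mul]; exact hzM
  | succ k ih =>
    obtain ⟨m, hm, hdiv, hle, hlt⟩ := ih
    set i := t + k with hi
    have hiL : L ≤ i := le_trans ht (by omega)
    have hσpos : 0 < sigmaNeg r m := sigmaNeg_pos hm
    have hcop : ∀ a : ℕ, Nat.Coprime m (q i ^ a) := by
      intro a
      apply Nat.Coprime.pow_right
      have : ¬ q i ∣ m := by
        intro hdvd
        obtain ⟨j, hj1, hj2, hj3⟩ := hdiv (q i) (q_prime i) hdvd
        have := q_strictMono.injective hj3.symm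
        omega
      exact (Nat.Prime.coprime_iff_not_dvd (q_prime i)).2 this |>.symm
    have hσmul : ∀ a : ℕ, sigmaNeg r (m * q i ^ a) = sigmaNeg r m * g r a i :=
      fun a => sigmaNeg_mul (hcop a)
    -- choose the exponent a
    have key : ∃ a : ℕ, sigmaNeg r m * g r a i ≤ z ∧
        z < sigmaNeg r m * g r a i * M r (t + (k+1)) := by
      by_cases hA : ∀ a, sigmaNeg r m * g r a i ≤ z
      · -- all exponents keep us below z
        have hlim : Tendsto (fun a => sigmaNeg r m * g r a i * M r (t + (k+1))) atTop
            (𝓝 (sigmaNeg r m * fp r i * M r (t + (k+1)))) := by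
          exact ((g_tendsto_fp hr i).const_mul _).mul_const _
        have hgt : z < sigmaNeg r m * fp r i * M r (t + (k+1)) := by
          have hMsucc : M r i = fp r i * M r (i + 1) := M_succ hr i
          have : sigmaNeg r m * fp r i * M r (t + (k+1)) = sigmaNeg r m * M r i := by
            rw [show t + (k+1) = i + 1 from by omega, hMsucc]
            ring
          rw [this]
          exact hlt
        have := hlim.eventually (eventually_gt_nhds hgt)
        obtain ⟨a, ha⟩ := this.exists
        exact ⟨a, hA a, ha⟩
      · push_neg at hA
        obtain ⟨a1, ha1⟩ := hA
        have hP : ∃ a, z < sigmaNeg r m * g r a i := ⟨a1, ha1⟩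
        set a0 := Nat.find hP with ha0
        have ha0P : z < sigmaNeg r m * g r a0 i := Nat.find_spec hP
        have ha0pos : 0 < a0 := by
          rcases Nat.eq_zero_or_pos a0 with h | h
          · exfalso
            rw [h] at ha0P
            rw [g_zero, mul_one] at ha0P
            linarith
          · exact h
        set a := a0 - 1 with ha
        have haa : a + 1 = a0 := by omega
        have hale : sigmaNeg r m * g r a i ≤ z := by
          have := Nat.find_min hP (m := a) (by omega)
          linarith [not_lt.1 this]
        refine ⟨a, hale, ?_⟩
        have hstep : z < sigmaNeg r m * g r (a+1) i := by rw [haa]; exact ha0P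
        have hratio : g r (a+1) i ≤ g r a i * (1 + x r i) := by
          have h1 := g_ratio hr a i
          have h2 : (x r i) ^ (a+1) ≤ x r i := by
            have hx0 := (x_pos (r := r) i).le
            have hx1 := (x_lt_one hr i).le
            calc (x r i) ^ (a+1) ≤ (x r i) ^ 1 :=
              pow_le_pow_of_le_one hx0 hx1 (by omega)
            _ = x r i := pow_one _
          have h3 : 0 < g r a i := g_pos hr a i
          nlinarith
        have hM1 : 1 + x r i ≤ M r (i + 1) := hnm i hiL
        have hgpos : 0 < g r a i := g_pos hr a i
        have hMge : (1:ℝ) ≤ M r (i+1) := one_le_M hr _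
        calc z < sigmaNeg r m * g r (a+1) i := hstep
          _ ≤ sigmaNeg r m * (g r a i * (1 + x r i)) := by
              apply mul_le_mul_of_nonneg_left hratio hσpos.le
          _ ≤ sigmaNeg r m * (g r a i * M r (i+1)) := by
              apply mul_le_mul_of_nonneg_left _ hσpos.le
              exact mul_le_mul_of_nonneg_left hM1 hgpos.le
          _ = sigmaNeg r m * g r a i * M r (t + (k+1)) := by
              rw [show t + (k+1) = i + 1 by omega]
              ring
    obtain ⟨a, haz, hazM⟩ := key
    refine ⟨m * q i ^ a, ?_, ?_, ?_, ?_⟩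
    · exact Nat.mul_pos hm (pow_pos (q_prime i).pos a)
    · intro p hp hdvd
      rcases (Nat.Prime.dvd_mul hp).1 hdvd with h | h
      · obtain ⟨j, hj1, hj2, hj3⟩ := hdiv p hp h
        exact ⟨j, hj1, by omega, hj3⟩
      · have : p = q i := by
          have := Nat.Prime.dvd_of_dvd_pow (n := a) hp h
          exact ((Nat.prime_dvd_prime_iff_eq hp (q_prime i)).1 this)
        exact ⟨i, by omega, by omega, this⟩
    · rw [hσmul a]; exact haz
    · rw [hσmul a]; exact hazM

lemma V_subset_sigmaSet (t : ℕ) : V r t ⊆ sigmaSet r := by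
  rintro y ⟨m, hm, _, rfl⟩
  exact ⟨m, hm, rfl⟩

lemma interval_subset_closure_V (hr : 1 < r) {L : ℕ}
    (hnm : ∀ t, L ≤ t → 1 + x r t ≤ M r (t + 1)) {t : ℕ} (ht : L ≤ t) :
    Set.Icc 1 (M r t) ⊆ closure (V r t) := by
  -- first deal with the half-open interval
  have hmain : Set.Ico 1 (M r t) ⊆ closure (V r t) := by
    rintro z ⟨hz1, hzM⟩
    rw [Metric.mem_closure_iff]
    intro ε hε
    -- find k with M r (t+k) - 1 small
    have htend : Tendsto (fun k => M r (t + k)) atTop (𝓝 1) := by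
      have h := (M_tendsto_one hr).comp (tendsto_add_atTop_nat t)
      exact h.congr fun k => by simp [Nat.add_comm]
    have hMt1 : (1:ℝ) ≤ M r t := one_le_M hr t
    have hεM : 0 < ε / M r t := div_pos hε (M_pos hr t)
    have hev : ∀ᶠ k in atTop, M r (t + k) < 1 + ε / M r t := by
      apply htend.eventually (eventually_lt_nhds (by linarith))
    obtain ⟨k, hk⟩ := hev.exists
    obtain ⟨m, hm, hdiv, hle, hlt⟩ := greedy hr hnm ht hz1 hzM k
    refine ⟨sigmaNeg r m, ⟨m, hm, ?_, rfl⟩, ?_⟩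
    · intro p hp hdvd
      obtain ⟨j, hj1, _, rfl⟩ := hdiv p hp hdvd
      exact q_strictMono.monotone hj1
    · rw [Real.dist_eq, abs_sub_lt_iff]
      have hσ1 : 1 ≤ sigmaNeg r m := one_le_sigmaNeg hm
      have hσz : sigmaNeg r m ≤ z := hle
      have hzq : z < sigmaNeg r m * (1 + ε / M r t) := by
        calc z < sigmaNeg r m * M r (t + k) := hlt
          _ ≤ sigmaNeg r m * (1 + ε / M r t) :=
            mul_le_mul_of_nonneg_left hk.le (by linarith)
      have hσM : sigmaNeg r m ≤ M r t := by linarith [hzM.le]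
      constructor
      · have : sigmaNeg r m * (ε / M r t) ≤ M r t * (ε / M r t) :=
          mul_le_mul_of_nonneg_right hσM hεM.le
        have hMne : (M r t) ≠ 0 := (M_pos hr t).ne'
        have h2 : M r t * (ε / M r t) = ε := by field_simp
        nlinarith
      · linarith
  -- now the endpoint
  rintro z ⟨hz1, hzM⟩
  rcases lt_or_eq_of_le hzM with h | h
  · exact hmain ⟨hz1, h⟩
  · subst h
    rcases eq_or_lt_of_le (one_le_M hr t) with hM1 | hM1
    · apply subset_closure
      refine ⟨1, one_pos, ?_, ?_⟩
      · intro p hp hdvd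
        exact absurd (Nat.eq_one_of_dvd_one hdvd) hp.ne_one
      · rw [sigmaNeg_one, ← hM1]
    · have h1 : M r t ∈ closure (Set.Ico 1 (M r t)) := by
        rw [closure_Ico (by linarith : (1:ℝ) ≠ M r t)]
        exact ⟨(one_le_M hr t), le_rfl⟩
      have h2 : closure (Set.Ico 1 (M r t)) ⊆ closure (closure (V r t)) :=
        closure_mono hmain
      rw [closure_closure] at h2
      exact h2 h1

/-! ### one-dimensional chaining lemma -/

lemma union_Icc_subset {K : Set ℝ} (hK : IsClosed K)
    (l u : ℕ → ℝ) (linf uinf : ℝ)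
    (hl : Monotone l) (hlu : ∀ a, l a ≤ u a) (hchain : ∀ a, l (a+1) ≤ u a)
    (hutend : Tendsto u atTop (𝓝 uinf))
    (hsub : ∀ a, Set.Icc (l a) (u a) ⊆ K) :
    Set.Icc (l 0) uinf ⊆ K := by
  rintro z ⟨hz0, hzu⟩
  by_cases hz : ∃ a, z ≤ u a
  · classical
    set a := Nat.find hz with ha
    have hzua : z ≤ u a := Nat.find_spec hz
    rcases Nat.eq_zero_or_pos a with h0 | hpos
    · apply hsub 0
      rw [h0] at hzua
      exact ⟨hz0, hzua⟩
    · have hprev : ¬ z ≤ u (a - 1) := Nat.find_min hz (by omega)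
      push_neg at hprev
      apply hsub a
      refine ⟨?_, hzua⟩
      have : l a ≤ u (a-1) := by
        have he : a = (a-1) + 1 := by omega
        rw [he]
        exact hchain _
      linarith
  · push_neg at hz
    have hzau : ∀ a, u a < z := hz
    have h1 : uinf ≤ z := le_of_tendsto hutend (Filter.Eventually.of_forall fun a => (hzau a).le)
    have hzeq : uinf = z := le_antisymm h1 hzu
    have hmem : ∀ a, u a ∈ K := fun a => hsub a ⟨hlu a, le_rfl⟩
    have h2 : uinf ∈ closure K := mem_closure_of_tendsto hutend
      (Filter.Eventually.of_forall hmem)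
    rw [hzeq] at h2
    rwa [hK.closure_eq] at h2

/-! ### exponent thresholds -/

/-- the threshold exponent for prime i relative to prime Lv -/
def D (Lv i : ℕ) : ℕ := ⌈Real.log (q Lv) / Real.log (q i)⌉₊

lemma log_q_pos (i : ℕ) : 0 < Real.log (q i) :=
  Real.log_pos (by exact_mod_cast (q_prime i).one_lt)

lemma one_le_D (Lv i : ℕ) : 1 ≤ D Lv i :=
  Nat.one_le_iff_ne_zero.2 (by
    have : 0 < D Lv i := Nat.ceil_pos.2 (div_pos (log_q_pos Lv) (log_q_pos i))
    omega)

lemma pow_key (hr : 1 < r) {Lv i e : ℕ} (he : D Lv i ≤ e) :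
    (x r i) ^ e ≤ x r Lv := by
  have hqi : (1:ℝ) < (q i : ℝ) := by exact_mod_cast (q_prime i).one_lt
  have hqL : (0:ℝ) < (q Lv : ℝ) := by exact_mod_cast (q_prime Lv).pos
  have hle : Real.log (q Lv) / Real.log (q i) ≤ (e : ℝ) := by
    have := Nat.ceil_le.1 he
    exact_mod_cast this
  have hlog : Real.log (q Lv) ≤ (e : ℝ) * Real.log (q i) := by
    rw [div_le_iff₀ (log_q_pos i)] at hle
    linarith
  have hrpow_pos : (0:ℝ) < (q i : ℝ) ^ (e : ℝ) := Real.rpow_pos_of_pos (by linarith) _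
  have hbase : (q Lv : ℝ) ≤ (q i : ℝ) ^ (e : ℝ) := by
    rw [← Real.log_le_log_iff hqL hrpow_pos, Real.log_rpow (by linarith)]
    exact hlog
  have h1 : (x r i) ^ e = ((q i : ℝ) ^ (e : ℝ)) ^ (-r) := by
    rw [x, ← Real.rpow_natCast ((q i : ℝ) ^ (-r)) e, ← Real.rpow_mul (by linarith),
      mul_comm, Real.rpow_mul (by linarith), Real.rpow_natCast, ← Real.rpow_natCast (q i : ℝ) e,
      ← Real.rpow_mul (by linarith), mul_comm, Real.rpow_mul (by linarith)]
  rw [h1, x]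
  exact Real.rpow_le_rpow_of_nonpos hqL hbase (by linarith)

/-! ### multiplicativity over several primes -/

lemma sigma_prod_mul (hr : 1 < r) {Lv : ℕ} (a : ℕ → ℕ) (s : Finset ℕ)
    (hs : ∀ i ∈ s, i < Lv) {m : ℕ} (hm : 0 < m)
    (hrough : ∀ p, p.Prime → p ∣ m → q Lv ≤ p) :
    sigmaNeg r ((∏ i ∈ s, q i ^ a i) * m) = (∏ i ∈ s, g r (a i) i) * sigmaNeg r m := by
  classical
  induction s using Finset.induction_on with
  | empty => simp
  | @insert i s his ih =>
    have hs' : ∀ j ∈ s, j < Lv := fun j hj => hs j (Finset.mem_insert_of_mem hj)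
    have hiL : i < Lv := hs i (Finset.mem_insert_self i s)
    have hnd : ¬ q i ∣ ((∏ j ∈ s, q j ^ a j) * m) := by
      intro hdvd
      rcases ((q_prime i).dvd_mul).1 hdvd with h | h
      · obtain ⟨j, hj, hdj⟩ := ((Nat.Prime.prime (q_prime i)).dvd_finset_prod_iff _).1 h
        have h2 := Nat.Prime.dvd_of_dvd_pow (q_prime i) hdj
        have heq := (Nat.prime_dvd_prime_iff_eq (q_prime i) (q_prime j)).1 h2
        have : i = j := q_strictMono.injective heq
        exact his (this ▸ hj)
      · have h1 := hrough _ (q_prime i) h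
        have h2 := q_strictMono hiL
        omega
    have hcop : Nat.Coprime (q i ^ a i) ((∏ j ∈ s, q j ^ a j) * m) :=
      Nat.Coprime.pow_left _ ((Nat.Prime.coprime_iff_not_dvd (q_prime i)).2 hnd)
    rw [Finset.prod_insert his, Finset.prod_insert his, mul_assoc, sigmaNeg_mul hcop,
      ih hs']
    have : sigmaNeg r (q i ^ a i) = g r (a i) i := rfl
    rw [this]
    ring

/-! ### the basic scaled interval -/

lemma scaled_interval (hr : 1 < r) {Lv : ℕ}
    (hnm : ∀ t, Lv ≤ t → 1 + x r t ≤ M r (t + 1)) (a : ℕ → ℕ) :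
    Set.Icc (∏ i ∈ Finset.range Lv, g r (a i) i)
      ((∏ i ∈ Finset.range Lv, g r (a i) i) * M r Lv) ⊆ closure (sigmaSet r) := by
  set c := ∏ i ∈ Finset.range Lv, g r (a i) i with hc
  have hcpos : 0 < c := Finset.prod_pos fun i _ => g_pos hr _ _
  rintro z ⟨hz1, hz2⟩
  have h1 : z / c ∈ Set.Icc 1 (M r Lv) := by
    constructor
    · rw [le_div_iff₀ hcpos]; linarith
    · rw [div_le_iff₀ hcpos]; linarith [hz2, mul_comm c (M r Lv)]
  have h3 : z / c ∈ closure (V r Lv) :=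
    interval_subset_closure_V hr hnm (le_refl Lv) h1
  have himg2 : (fun y => c * y) '' V r Lv ⊆ sigmaSet r := by
    rintro w ⟨y, ⟨m, hm, hq, rfl⟩, rfl⟩
    refine ⟨(∏ i ∈ Finset.range Lv, q i ^ a i) * m, ?_, ?_⟩
    · exact Nat.mul_pos (Finset.prod_pos fun i _ => pow_pos (q_prime i).pos _) hm
    · rw [sigma_prod_mul hr a _ (fun i hi => Finset.mem_range.1 hi) hm hq]
  have hcont : Continuous fun y : ℝ => c * y := continuous_const.mul continuous_id
  have himg : (fun y => c * y) '' closure (V r Lv) ⊆ closure ((fun y => c * y) '' V r Lv) :=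
    image_closure_subset_closure_image hcont
  have h4 : c * (z / c) ∈ closure ((fun y => c * y) '' V r Lv) := himg ⟨z / c, h3, rfl⟩
  have h5 : c * (z / c) ∈ closure (sigmaSet r) := closure_mono himg2 h4
  have h6 : c * (z / c) = z := by field_simp
  rwa [h6] at h5

/-! ### the chain claim -/

/-- the cap value for coordinate i -/
def capf (r : ℝ) (Lv : ℕ) (b : ℕ → ℕ) (i : ℕ) : ℝ :=
  if b i + 1 = D Lv i then fp r i else g r (b i) i

lemma g_le_capf (hr : 1 < r) {Lv : ℕ} (b : ℕ → ℕ) (i : ℕ) :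
    g r (b i) i ≤ capf r Lv b i := by
  rw [capf]
  split
  · exact (g_lt_fp hr _ _).le
  · exact le_rfl

lemma capf_pos (hr : 1 < r) {Lv : ℕ} (b : ℕ → ℕ) (i : ℕ) : 0 < capf r Lv b i :=
  lt_of_lt_of_le (g_pos hr _ _) (g_le_capf hr b i)

lemma prod_update_g (a : ℕ → ℕ) (j v : ℕ) :
    ∏ i ∈ Finset.range (j + 1), g r (Function.update a j v i) i
      = (∏ i ∈ Finset.range j, g r (a i) i) * g r v j := by
  classical
  rw [Finset.prod_range_succ, Function.update_self]
  congr 1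
  apply Finset.prod_congr rfl
  intro i hi
  rw [Function.update_of_ne (by have := Finset.mem_range.1 hi; omega)]

lemma chain_claim (hr : 1 < r) {Lv : ℕ}
    (hnm : ∀ t, Lv ≤ t → 1 + x r t ≤ M r (t + 1)) (b : ℕ → ℕ)
    (hb : ∀ i, i < Lv → b i + 1 ≤ D Lv i) :
    ∀ d, d ≤ Lv → ∀ a : ℕ → ℕ,
      (∀ i, i < Lv - d → b i ≤ a i ∧ (b i + 1 < D Lv i → a i = b i)) →
      Set.Icc
        ((∏ i ∈ Finset.range (Lv - d), g r (a i) i) *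
          ∏ i ∈ Finset.Ico (Lv - d) Lv, g r (b i) i)
        (((∏ i ∈ Finset.range (Lv - d), g r (a i) i) *
          ∏ i ∈ Finset.Ico (Lv - d) Lv, capf r Lv b i) * M r Lv)
      ⊆ closure (sigmaSet r) := by
  classical
  intro d
  induction d with
  | zero =>
    intro _ a _
    have h0 : Lv - 0 = Lv := by omega
    rw [h0, Finset.Ico_self]
    simpa using scaled_interval hr hnm a
  | succ d ihd =>
    intro hdL a ha
    set j := Lv - (d + 1) with hj
    have hjL : j < Lv := by omega
    have hsucc : Lv - d = j + 1 := by omega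
    have hsplit_g : ∏ i ∈ Finset.Ico j Lv, g r (b i) i
        = g r (b j) j * ∏ i ∈ Finset.Ico (j+1) Lv, g r (b i) i :=
      Finset.prod_eq_prod_Ico_succ_bot hjL _
    have hsplit_cap : ∏ i ∈ Finset.Ico j Lv, capf r Lv b i
        = capf r Lv b j * ∏ i ∈ Finset.Ico (j+1) Lv, capf r Lv b i :=
      Finset.prod_eq_prod_Ico_succ_bot hjL _
    set G := ∏ i ∈ Finset.range j, g r (a i) i with hG
    set Rlow := ∏ i ∈ Finset.Ico (j+1) Lv, g r (b i) i with hRlow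
    set Cap := ∏ i ∈ Finset.Ico (j+1) Lv, capf r Lv b i with hCap
    have hGpos : 0 < G := Finset.prod_pos fun i _ => g_pos hr _ _
    have hRpos : 0 < Rlow := Finset.prod_pos fun i _ => g_pos hr _ _
    have hCpos : 0 < Cap := Finset.prod_pos fun i _ => capf_pos hr _ _
    have hRC : Rlow ≤ Cap :=
      Finset.prod_le_prod (fun i _ => (g_pos hr _ _).le) (fun i _ => g_le_capf hr b i)
    have hML : 1 ≤ M r Lv := one_le_M hr Lv
    -- the sub-interval from the induction hypothesis, for exponent v at coordinate j
    have hIH : ∀ v : ℕ, b j ≤ v → (b j + 1 < D Lv j → v = b j) →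
        Set.Icc (G * g r v j * Rlow) ((G * g r v j * Cap) * M r Lv)
          ⊆ closure (sigmaSet r) := by
      intro v hv1 hv2
      have h := ihd (by omega) (Function.update a j v) ?const
      case const =>
        intro i hi
        rw [hsucc] at hi
        rcases Nat.lt_or_ge i j with h1 | h1
        · rw [Function.update_of_ne (by omega)]
          exact ha i (by omega)
        · have : i = j := by omega
          subst this
          rw [Function.update_self]
          exact ⟨hv1, hv2⟩
      rw [hsucc, prod_update_g, ← hG, ← hRlow, ← hCap] at h
      exact h
    by_cases hcase : b j + 1 = D Lv j
    · -- free coordinate: chain infinitely many intervals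
      have hcapj : capf r Lv b j = fp r j := by rw [capf, if_pos hcase]
      have hKcl : IsClosed (closure (sigmaSet r)) := isClosed_closure
      have hmono : Monotone (fun s => G * g r (b j + s) j * Rlow) := by
        intro s1 s2 hs
        have := g_mono hr (show b j + s1 ≤ b j + s2 by omega) j
        have h1 : 0 < G * Rlow := mul_pos hGpos hRpos
        calc G * g r (b j + s1) j * Rlow = g r (b j + s1) j * (G * Rlow) := by ring
          _ ≤ g r (b j + s2) j * (G * Rlow) := mul_le_mul_of_nonneg_right this h1.le
          _ = G * g r (b j + s2) j * Rlow := by ring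
      have hlu : ∀ s : ℕ, G * g r (b j + s) j * Rlow ≤ (G * g r (b j + s) j * Cap) * M r Lv := by
        intro s
        have hg := g_pos hr (b j + s) j
        have hGg : (0:ℝ) ≤ G * g r (b j + s) j := (mul_pos hGpos hg).le
        have h1 : G * g r (b j + s) j * Rlow ≤ G * g r (b j + s) j * Cap :=
          mul_le_mul_of_nonneg_left hRC hGg
        have h2 : G * g r (b j + s) j * Cap ≤ (G * g r (b j + s) j * Cap) * M r Lv :=
          le_mul_of_one_le_right (by nlinarith) hML
        linarith
      have hchain : ∀ s : ℕ, G * g r (b j + (s+1)) j * Rlow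
          ≤ (G * g r (b j + s) j * Cap) * M r Lv := by
        intro s
        have hg := g_pos hr (b j + s) j
        have hkey : g r (b j + (s+1)) j ≤ g r (b j + s) j * M r Lv := by
          have h1 : g r (b j + s + 1) j ≤ g r (b j + s) j * (1 + (x r j) ^ (b j + s + 1)) :=
            g_ratio hr _ _
          have h2 : (x r j) ^ (b j + s + 1) ≤ x r Lv :=
            pow_key hr (by omega)
          have h3 : 1 + x r Lv ≤ fp r Lv := one_add_x_le_fp hr Lv
          have h4 : fp r Lv ≤ M r Lv := fp_le_M hr Lv
          have h5 : (0:ℝ) < x r Lv := x_pos Lv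
          have he : b j + (s+1) = b j + s + 1 := by omega
          rw [he]
          nlinarith
        calc G * g r (b j + (s+1)) j * Rlow
            ≤ G * (g r (b j + s) j * M r Lv) * Rlow := by
              apply mul_le_mul_of_nonneg_right _ hRpos.le
              exact mul_le_mul_of_nonneg_left hkey hGpos.le
          _ = (G * g r (b j + s) j * Rlow) * M r Lv := by ring
          _ ≤ (G * g r (b j + s) j * Cap) * M r Lv := by
              apply mul_le_mul_of_nonneg_right _ (by linarith : (0:ℝ) ≤ M r Lv)
              exact mul_le_mul_of_nonneg_left hRC (mul_pos hGpos hg).le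
      have hutend : Tendsto (fun s => (G * g r (b j + s) j * Cap) * M r Lv) atTop
          (𝓝 ((G * fp r j * Cap) * M r Lv)) := by
        have hgt : Tendsto (fun s => g r (b j + s) j) atTop (𝓝 (fp r j)) := by
          have h := (g_tendsto_fp hr j).comp (tendsto_add_atTop_nat (b j))
          exact h.congr fun s => by simp [Nat.add_comm]
        have h2 := ((hgt.const_mul G).mul_const Cap).mul_const (M r Lv)
        exact h2.congr fun s => by ring
      have hsub : ∀ s : ℕ, Set.Icc (G * g r (b j + s) j * Rlow)
          ((G * g r (b j + s) j * Cap) * M r Lv) ⊆ closure (sigmaSet r) := by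
        intro s
        exact hIH (b j + s) (by omega) (by omega)
      have hmain := union_Icc_subset hKcl
        (fun s => G * g r (b j + s) j * Rlow)
        (fun s => (G * g r (b j + s) j * Cap) * M r Lv)
        0 ((G * fp r j * Cap) * M r Lv)
        hmono hlu hchain hutend hsub
      -- now identify the target interval
      intro z hz
      obtain ⟨hz1, hz2⟩ := hz
      rw [hsplit_g] at hz1
      rw [hsplit_cap, hcapj] at hz2
      apply hmain
      refine ⟨?_, ?_⟩
      · show G * g r (b j + 0) j * Rlow ≤ z
        have he : G * g r (b j + 0) j * Rlow = G * (g r (b j) j * Rlow) := by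
          rw [Nat.add_zero]; ring
        rw [he]; exact hz1
      · show z ≤ (G * fp r j * Cap) * M r Lv
        have he : (G * fp r j * Cap) * M r Lv = G * (fp r j * Cap) * M r Lv := by ring
        rw [he]; exact hz2
    · -- fixed coordinate
      have hlt : b j + 1 < D Lv j := lt_of_le_of_ne (hb j hjL) hcase
      have h := hIH (b j) le_rfl (fun _ => rfl)
      have hcapj : capf r Lv b j = g r (b j) j := by rw [capf, if_neg hcase]
      intro z hz
      obtain ⟨hz1, hz2⟩ := hz
      rw [hsplit_g] at hz1
      rw [hsplit_cap, hcapj] at hz2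
      apply h
      refine ⟨?_, ?_⟩
      · have he : G * g r (b j) j * Rlow = G * (g r (b j) j * Rlow) := by ring
        rw [he]; exact hz1
      · have he : (G * g r (b j) j * Cap) * M r Lv
            = G * (g r (b j) j * Cap) * M r Lv := by ring
        rw [he]; exact hz2

/-! ### coverage -/

lemma q_coprime_pow {i j a : ℕ} (hij : i ≠ j) : Nat.Coprime (q i) (q j ^ a) := by
  apply Nat.Coprime.pow_right
  exact (Nat.coprime_primes (q_prime i) (q_prime j)).2
    (fun h => hij (q_strictMono.injective h))

lemma prod_pow_factorization_dvd {n : ℕ} (hn : 0 < n) (s : Finset ℕ)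
    (e : ℕ → ℕ) (he : ∀ i, e i = n.factorization (q i)) :
    (∏ i ∈ s, q i ^ e i) ∣ n := by
  classical
  induction s using Finset.induction_on with
  | empty => simpa using Nat.one_dvd n
  | @insert i s his ih =>
    rw [Finset.prod_insert his]
    apply Nat.Coprime.mul_dvd_of_dvd_of_dvd
    · apply Nat.Coprime.pow_left
      apply Nat.Coprime.prod_right
      intro j hj
      exact q_coprime_pow (fun h => his (h ▸ hj))
    · rw [he i]
      exact Nat.ordProj_dvd n (q i)
    · exact ih

lemma coverage (hr : 1 < r) {Lv : ℕ} {n : ℕ} (hn : 0 < n) :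
    ∃ b : ℕ → ℕ, (∀ i, i < Lv → b i + 1 ≤ D Lv i) ∧
      (∏ i ∈ Finset.range Lv, g r (b i) i) ≤ sigmaNeg r n ∧
      sigmaNeg r n ≤ (∏ i ∈ Finset.range Lv, capf r Lv b i) * M r Lv := by
  classical
  set e : ℕ → ℕ := fun i => n.factorization (q i) with he
  set u : ℕ := ∏ i ∈ Finset.range Lv, q i ^ e i with hu
  have hudvd : u ∣ n := prod_pow_factorization_dvd hn _ e (fun i => rfl)
  have hupos : 0 < u := Finset.prod_pos fun i _ => pow_pos (q_prime i).pos _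
  obtain ⟨m, hnm⟩ := hudvd
  have hmpos : 0 < m := by
    rcases Nat.eq_zero_or_pos m with h | h
    · rw [h, mul_zero] at hnm; omega
    · exact h
  have hrough : ∀ p, p.Prime → p ∣ m → q Lv ≤ p := by
    intro p hp hdvd
    by_contra hc
    push_neg at hc
    have hiL : idx p < Lv := by
      by_contra h2
      push_neg at h2
      have := q_strictMono.monotone h2
      rw [q_idx hp] at this
      omega
    set i := idx p with hi
    have hqip : q i = p := q_idx hp
    -- q i ^ (e i + 1) divides n
    have hsplit : u = q i ^ e i * ∏ j ∈ (Finset.range Lv).erase i, q j ^ e j := by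
      rw [hu, ← Finset.mul_prod_erase _ _ (Finset.mem_range.2 hiL)]
    have hdvd2 : q i ^ (e i + 1) ∣ n := by
      rw [hnm, hsplit, pow_succ]
      have h1 : q i ∣ (∏ j ∈ (Finset.range Lv).erase i, q j ^ e j) * m :=
        Dvd.dvd.mul_left (hqip ▸ hdvd) _
      calc q i ^ e i * q i ∣ q i ^ e i * ((∏ j ∈ (Finset.range Lv).erase i, q j ^ e j) * m) :=
            mul_dvd_mul_left _ h1
        _ = q i ^ e i * (∏ j ∈ (Finset.range Lv).erase i, q j ^ e j) * m := by ring
    exact Nat.pow_succ_factorization_not_dvd hn.ne' (q_prime i) hdvd2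
  have hsigma : sigmaNeg r n = (∏ i ∈ Finset.range Lv, g r (e i) i) * sigmaNeg r m := by
    rw [hnm, hu]
    exact sigma_prod_mul hr e _ (fun i hi => Finset.mem_range.1 hi) hmpos hrough
  have hY1 : 1 ≤ sigmaNeg r m := one_le_sigmaNeg hmpos
  have hY2 : sigmaNeg r m ≤ M r Lv := sigmaNeg_rough_le hr hmpos hrough
  refine ⟨fun i => min (e i) (D Lv i - 1), ?_, ?_, ?_⟩
  · intro i hi
    show min (e i) (D Lv i - 1) + 1 ≤ D Lv i
    have := one_le_D Lv i
    omega
  · rw [hsigma]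
    have h1 : ∏ i ∈ Finset.range Lv, g r (min (e i) (D Lv i - 1)) i
        ≤ ∏ i ∈ Finset.range Lv, g r (e i) i :=
      Finset.prod_le_prod (fun i _ => (g_pos hr _ _).le)
        (fun i _ => g_mono hr (min_le_left _ _) i)
    have h2 : (0:ℝ) < ∏ i ∈ Finset.range Lv, g r (e i) i :=
      Finset.prod_pos fun i _ => g_pos hr _ _
    calc ∏ i ∈ Finset.range Lv, g r (min (e i) (D Lv i - 1)) i
        ≤ ∏ i ∈ Finset.range Lv, g r (e i) i := h1
      _ ≤ (∏ i ∈ Finset.range Lv, g r (e i) i) * sigmaNeg r m :=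
        le_mul_of_one_le_right h2.le hY1
  · rw [hsigma]
    have hcap : ∀ i, g r (e i) i ≤ capf r Lv (fun i => min (e i) (D Lv i - 1)) i := by
      intro i
      rw [capf]
      split
      · exact (g_lt_fp hr _ _).le
      · rename_i hne
        have hne' : ¬(min (e i) (D Lv i - 1) + 1 = D Lv i) := hne
        have hD := one_le_D Lv i
        have hmin : min (e i) (D Lv i - 1) = e i := by omega
        rw [hmin]
    apply mul_le_mul
    · exact Finset.prod_le_prod (fun i _ => (g_pos hr _ _).le) (fun i _ => hcap i)
    · exact hY2
    · linarith
    · exact (Finset.prod_pos fun i _ => capf_pos hr _ _).le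

end
end Stmt12

open Stmt12 in
/-- If `p_L` is the largest `r`-mighty prime (`L ≥ 1`, `p_i` being the `i`-th prime,
1-indexed), then the number of connected components of the closure of `σ_{-r}(ℕ⁺)` is at
most `∏_{i=1}^{L} ⌈log p_{L+1} / log p_i⌉`. Here `Nat.nth Nat.Prime` is 0-indexed, so the
`i`-th prime (1-indexed) is `Nat.nth Nat.Prime (i - 1)`. -/
theorem stmt_12 (r : ℝ) (hr : 1 < r) (L : ℕ) (hL : 0 < L)
    (hmighty : IsMighty r (Nat.nth Nat.Prime (L - 1)))
    (hlargest : ∀ q : ℕ, q.Prime → Nat.nth Nat.Prime (L - 1) < q → ¬ IsMighty r q) :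
    Cardinal.mk (ConnectedComponents ↥(closure (sigmaSet r))) ≤
      ((∏ i ∈ Finset.range L,
        ⌈Real.log (Nat.nth Nat.Prime L : ℝ) / Real.log (Nat.nth Nat.Prime i : ℝ)⌉₊ : ℕ) :
        Cardinal) := by
  classical
  have hnm : ∀ t, L ≤ t → 1 + x r t ≤ M r (t + 1) := by
    intro t ht
    have hlt : Nat.nth Nat.Prime (L - 1) < q t := q_strictMono (show L - 1 < t by omega)
    have h := hlargest (q t) (q_prime t) hlt
    rw [IsMighty, not_lt] at h
    rw [mightyProd_eq hr t] at h
    exact h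
  set K := closure (sigmaSet r) with hK
  -- the finite family of closed intervals
  let ι := Π i : Fin L, Fin (D L i.1)
  let bfun : ι → ℕ → ℕ := fun c i => if h : i < L then (c ⟨i, h⟩ : ℕ) else 0
  let Cset : ι → Set ℝ := fun c =>
    Set.Icc (∏ i ∈ Finset.range L, g r (bfun c i) i)
      ((∏ i ∈ Finset.range L, capf r L (bfun c) i) * M r L)
  have hCK : ∀ c, Cset c ⊆ K := by
    intro c
    have hb : ∀ i, i < L → bfun c i + 1 ≤ D L i := by
      intro i hi
      show (if h : i < L then (c ⟨i, h⟩ : ℕ) else 0) + 1 ≤ D L i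
      rw [dif_pos hi]
      exact (c ⟨i, hi⟩).2
    have h := chain_claim hr hnm (bfun c) hb L le_rfl (fun _ => 0)
      (by intro i hi; omega)
    rw [Nat.sub_self, Finset.range_zero, Finset.prod_empty, one_mul, one_mul,
      ← Finset.range_eq_Ico] at h
    exact h
  have hcover : sigmaSet r ⊆ ⋃ c : ι, Cset c := by
    rintro y ⟨n, hn, rfl⟩
    obtain ⟨b, hb, h1, h2⟩ := coverage hr (Lv := L) hn
    have hbD : ∀ i : Fin L, b i.1 < D L i.1 := fun i => by have := hb i.1 i.2; omega
    let c : ι := fun i => ⟨b i.1, hbD i⟩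
    have hbeq : ∀ i, i < L → bfun c i = b i := by
      intro i hi
      show (if h : i < L then (c ⟨i, h⟩ : ℕ) else 0) = b i
      rw [dif_pos hi]
    have hg : ∏ i ∈ Finset.range L, g r (bfun c i) i = ∏ i ∈ Finset.range L, g r (b i) i :=
      Finset.prod_congr rfl fun i hi => by rw [hbeq i (Finset.mem_range.1 hi)]
    have hcap : ∏ i ∈ Finset.range L, capf r L (bfun c) i
        = ∏ i ∈ Finset.range L, capf r L b i := by
      apply Finset.prod_congr rfl
      intro i hi
      rw [capf, capf, hbeq i (Finset.mem_range.1 hi)]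
    refine Set.mem_iUnion.2 ⟨c, ?_, ?_⟩
    · rw [hg]; exact h1
    · rw [hcap]; exact h2
  have hclosed : IsClosed (⋃ c : ι, Cset c) :=
    isClosed_iUnion_of_finite fun c => isClosed_Icc
  have hKsub : K ⊆ ⋃ c : ι, Cset c := closure_minimal hcover hclosed
  -- counting components
  have hmem : ∀ z : ↥K, ∃ c : ι, (z : ℝ) ∈ Cset c := fun z => Set.mem_iUnion.1 (hKsub z.2)
  let F : ConnectedComponents ↥K → ι := fun comp => (hmem (Quotient.out comp)).choose
  have hF : ∀ comp, ((Quotient.out comp : ↥K) : ℝ) ∈ Cset (F comp) :=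
    fun comp => (hmem (Quotient.out comp)).choose_spec
  have hFinj : Function.Injective F := by
    intro c1 c2 hc
    set x1 : ↥K := Quotient.out c1 with hx1
    set x2 : ↥K := Quotient.out c2 with hx2
    have hm1 : (x1 : ℝ) ∈ Cset (F c1) := hF c1
    have hm2 : (x2 : ℝ) ∈ Cset (F c1) := hc ▸ hF c2
    -- the preimage of Cset (F c1) in the subtype is preconnected
    have hpre : IsPreconnected ((Subtype.val : ↥K → ℝ) ⁻¹' Cset (F c1)) := by
      rw [← Topology.IsInducing.subtypeVal.isPreconnected_image]
      have himg : (Subtype.val : ↥K → ℝ) '' ((Subtype.val : ↥K → ℝ) ⁻¹' Cset (F c1))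
          = Cset (F c1) := by
        rw [Subtype.image_preimage_coe]
        exact Set.inter_eq_right.2 (hCK (F c1))
      rw [himg]
      exact isPreconnected_Icc
    have hsubK : ((Subtype.val : ↥K → ℝ) ⁻¹' Cset (F c1)) ⊆ connectedComponent x1 :=
      hpre.subset_connectedComponent hm1
    have hx2mem : x2 ∈ connectedComponent x1 := hsubK hm2
    have : (⟦x2⟧ : ConnectedComponents ↥K) = ⟦x1⟧ :=
      ConnectedComponents.coe_eq_coe'.2 hx2mem
    rw [← Quotient.out_eq c1, ← Quotient.out_eq c2]
    exact this.symm
  have hcard : Cardinal.mk (ConnectedComponents ↥K) ≤ Cardinal.mk ι :=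
    Cardinal.mk_le_of_injective hFinj
  have hι : Cardinal.mk ι = ((∏ i ∈ Finset.range L, D L i : ℕ) : Cardinal) := by
    rw [Cardinal.mk_fintype]
    congr 1
    rw [Fintype.card_pi]
    simp only [Fintype.card_fin]
    exact Fin.prod_univ_eq_prod_range _ L
  rw [hι] at hcard
  exact hcard
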